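/- arXiv:2511.14526 — 5 statements merged into one kernel-verified Lean document; each statement's English description precedes it below -/
import Mathlib

section
/- Let D be a directed graph, s, t vertices, B an st-embracing spanning tree, and write the directed path B[s,t] as arcs f_1, ..., f_k with f_i = (v_{i-1}, v_i), v_0 = s, v_k = t. Suppose T is an st-embracing spanning tree of D such that all arcs of B[s, v_{i-1}] belong to T and f_i ∉ T, for some i ∈ {1, ..., k}. Then there exists an arc e ∈ T such that T' = (T \ {e}) ∪ {f_i} is an st-embracing spanning tree containing all arcs of B[s, v_i]. -/
/-- A directed path from `s` to `t` using arcs of `T`: a duplicate-free vertex list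
starting at `s`, ending at `t`, with every consecutive pair an arc of `T`. -/
def IsDiPath {V : Type*} [DecidableEq V] (T : Finset (V × V)) (s t : V) (p : List V) : Prop :=
  p.Nodup ∧ p.head? = some s ∧ p.getLast? = some t ∧ p.Chain' (fun a b => (a, b) ∈ T)

/-- A spanning tree `T` is `st`-embracing if the unique tree path from `s` to `t`
is a directed `s`-`t` path; equivalently, `T` contains a directed `s`-`t` path. -/
def StEmbracing {V : Type*} [DecidableEq V] (T : Finset (V × V)) (s t : V) : Prop :=
  ∃ p, IsDiPath T s t p

/-- An arc set is a spanning tree if its underlying undirected graph is a spanning tree: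
it is connected, has `|V| - 1` arcs, and contains no loops nor both orientations of an edge. -/
def IsSpanningTree {V : Type*} [Fintype V] [DecidableEq V] (T : Finset (V × V)) : Prop :=
  (SimpleGraph.fromRel (fun a b => (a, b) ∈ T)).Connected ∧
    T.card = Fintype.card V - 1 ∧ ∀ a ∈ T, a.1 ≠ a.2 ∧ (a.2, a.1) ∉ T

/-- The (undirected) tree path between `u` and `v` in `T`: a duplicate-free vertex list
whose consecutive pairs are arcs of `T` in one of the two orientations. -/
def IsTreePath {V : Type*} [DecidableEq V] (T : Finset (V × V)) (u v : V) (p : List V) : Prop :=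
  p.Nodup ∧ p.head? = some u ∧ p.getLast? = some v ∧
    p.Chain' (fun a b => (a, b) ∈ T ∨ (b, a) ∈ T)



open List

lemma exists_dup_decomp {α : Type*} : ∀ (l : List α), ¬ l.Nodup →
    ∃ (a : α) (l₁ l₂ l₃ : List α), l = l₁ ++ a :: (l₂ ++ a :: l₃)
  | [], h => absurd nodup_nil h
  | b :: r, h => by
    by_cases hb : b ∈ r
    · obtain ⟨l₂, l₃, rfl⟩ := List.append_of_mem hb
      exact ⟨b, [], l₂, l₃, rfl⟩
    · have : ¬ r.Nodup := fun hn => h (hn.cons hb)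
      obtain ⟨a, l₁, l₂, l₃, rfl⟩ := exists_dup_decomp r this
      exact ⟨a, b :: l₁, l₂, l₃, rfl⟩

lemma chain'_to_nodup_aux {α : Type*} (R : α → α → Prop) :
    ∀ (n : ℕ) (w : List α) {s t : α}, w.length ≤ n → w.Chain' R → w.head? = some s →
      w.getLast? = some t →
    ∃ p : List α, p.Nodup ∧ p.head? = some s ∧ p.getLast? = some t ∧ p.Chain' R := by
  intro n
  induction n with
  | zero =>
    intro w s t hl hc hh hg
    have : w = [] := List.length_eq_zero_iff.1 (Nat.le_zero.1 hl)
    subst this; simp at hh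
  | succ n ih =>
    intro w s t hl hc hh hg
    by_cases hn : w.Nodup
    · exact ⟨w, hn, hh, hg, hc⟩
    · obtain ⟨a, l₁, l₂, l₃, rfl⟩ := exists_dup_decomp w hn
      refine ih (l₁ ++ a :: l₃) ?_ ?_ ?_ ?_
      · have := hl
        simp only [length_append, length_cons] at this ⊢
        omega
      · have h1 := hc.left_of_append
        have h2 : Chain' R ((a :: l₂) ++ (a :: l₃)) := by
          have := hc.right_of_append
          simpa [Chain'] using this
        have h3 := h2.right_of_append
        refine IsChain.append h1 h3 ?_
        intro x hx y hy
        have := (isChain_append.1 hc).2.2 x hx y (by simpa using hy)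
        simpa [show y = a by simpa using hy.symm] using this
      · cases l₁ <;> simpa using hh
      · rw [getLast?_append_cons] at hg ⊢
        rwa [show (a : α) :: (l₂ ++ a :: l₃) = (a :: l₂) ++ (a :: l₃) by simp,
          getLast?_append_cons] at hg

lemma chain'_to_nodup {α : Type*} (R : α → α → Prop) (w : List α) {s t : α}
    (hc : w.Chain' R) (hh : w.head? = some s) (hg : w.getLast? = some t) :
    ∃ p : List α, p.Nodup ∧ p.head? = some s ∧ p.getLast? = some t ∧ p.Chain' R :=
  chain'_to_nodup_aux R w.length w le_rfl hc hh hg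

open List SimpleGraph

/-- strengthen a chain' with membership information. -/
lemma chain'_mem {α : Type*} {R : α → α → Prop} :
    ∀ {l : List α}, l.Chain' R → l.Chain' (fun a b => R a b ∧ a ∈ l ∧ b ∈ l.tail)
  | [], _ => isChain_nil
  | [a], _ => isChain_singleton _
  | a :: b :: l, h => by
    simp only [Chain', isChain_cons_cons] at h
    refine isChain_cons_cons.2 ⟨⟨h.1, by simp, by simp⟩, ?_⟩
    refine (chain'_mem h.2).imp ?_
    rintro x y ⟨h1, h2, h3⟩
    exact ⟨h1, by simp [h2], by simp only [tail_cons] at h3 ⊢; exact mem_of_mem_tail h3⟩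

/-- a chain' of adjacencies yields reachability. -/
lemma reachable_of_chain' {V : Type*} {G : SimpleGraph V} :
    ∀ (p : List V) {a b : V}, p.Chain' G.Adj → p.head? = some a → p.getLast? = some b →
      G.Reachable a b
  | [], a, b, _, hh, _ => by simp at hh
  | [x], a, b, _, hh, hg => by
    simp at hh hg; subst hh; rw [hg]
  | x :: y :: l, a, b, hc, hh, hg => by
    simp only [head?_cons, Option.some.injEq] at hh
    subst hh
    simp only [Chain', isChain_cons_cons] at hc
    refine (hc.1.reachable).trans ?_
    exact reachable_of_chain' (y :: l) hc.2 rfl (by simpa using hg)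

/-- transfer reachability along a map of adjacency into reachability. -/
lemma reachable_transfer {V : Type*} {G G' : SimpleGraph V}
    (h : ∀ a b, G.Adj a b → G'.Reachable a b) {a b : V} (hr : G.Reachable a b) :
    G'.Reachable a b := by
  obtain ⟨w⟩ := hr
  induction w with
  | nil => exact Reachable.refl _
  | cons ha _ ih => exact (h _ _ ha).trans ih

open List SimpleGraph Finset

lemma props_exchange {V : Type*} [DecidableEq V] (T : Finset (V × V))
    (hprop : ∀ a ∈ T, a.1 ≠ a.2 ∧ (a.2, a.1) ∉ T) (e : V × V) (p q : V) (hpq : p ≠ q)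
    (hgE : (q, p) ∉ T.erase e) (hf : (p, q) ∉ T) :
    ∀ a ∈ insert (p, q) (T.erase e), a.1 ≠ a.2 ∧ (a.2, a.1) ∉ insert (p, q) (T.erase e) := by
  intro a ha
  rcases Finset.mem_insert.1 ha with rfl | ha
  · refine ⟨hpq, ?_⟩
    intro h
    rcases Finset.mem_insert.1 h with h | h
    · exact hpq (congrArg Prod.snd h)
    · exact hgE h
  · have haT := Finset.mem_of_mem_erase ha
    refine ⟨(hprop a haT).1, ?_⟩
    intro h
    rcases Finset.mem_insert.1 h with h | h
    · -- (a.2, a.1) = (p, q) ⇒ a = (q, p)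
      have : a = (q, p) := by
        have h1 : a.2 = p := congrArg Prod.fst h
        have h2 : a.1 = q := congrArg Prod.snd h
        exact Prod.ext h2 h1
      exact hgE (this ▸ ha)
    · exact (hprop a haT).2 (Finset.mem_of_mem_erase h)

lemma card_exchange {V : Type*} [DecidableEq V] (T : Finset (V × V)) (e f : V × V)
    (he : e ∈ T) (hf : f ∉ T) : (insert f (T.erase e)).card = T.card := by
  rw [Finset.card_insert_of_notMem (fun h => hf (Finset.mem_of_mem_erase h)),
    Finset.card_erase_of_mem he]
  have : 1 ≤ T.card := Finset.card_pos.2 ⟨e, he⟩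
  omega

lemma reach_of_chain'_or {V : Type*} [DecidableEq V] {S : Finset (V × V)}
    (hprop : ∀ a ∈ S, a.1 ≠ a.2) (p : List V) {a b : V}
    (hc : p.Chain' (fun x y => (x, y) ∈ S ∨ (y, x) ∈ S))
    (hh : p.head? = some a) (hl : p.getLast? = some b) :
    (SimpleGraph.fromRel fun x y => (x, y) ∈ S).Reachable a b := by
  refine reachable_of_chain' p ?_ hh hl
  refine hc.imp ?_
  intro x y h
  refine (SimpleGraph.fromRel_adj _ _ _).2 ⟨?_, h⟩
  rcases h with h | h
  · exact hprop _ h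
  · exact (hprop _ h).symm

lemma connected_exchange {V : Type*} [Fintype V] [DecidableEq V] (T : Finset (V × V))
    (e f : V × V)
    (hconn : (SimpleGraph.fromRel fun a b => (a, b) ∈ T).Connected)
    (hdet : (SimpleGraph.fromRel fun a b => (a, b) ∈ insert f (T.erase e)).Reachable e.1 e.2)
    (hprop' : ∀ a ∈ insert f (T.erase e), a.1 ≠ a.2) :
    (SimpleGraph.fromRel fun a b => (a, b) ∈ insert f (T.erase e)).Connected := by
  rw [SimpleGraph.connected_iff] at hconn ⊢
  refine ⟨?_, hconn.2⟩
  intro a b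
  refine reachable_transfer ?_ (hconn.1 a b)
  intro a b hab
  rw [SimpleGraph.fromRel_adj _ a b] at hab
  obtain ⟨hne, h | h⟩ := hab
  · by_cases hEq : (a, b) = e
    · subst hEq; simpa using hdet
    · exact ((SimpleGraph.fromRel_adj _ _ _).2 ⟨hne, Or.inl
        (Finset.mem_insert_of_mem (Finset.mem_erase.2 ⟨hEq, h⟩))⟩).reachable
  · by_cases hEq : (b, a) = e
    · subst hEq; simpa using hdet.symm
    · exact ((SimpleGraph.fromRel_adj _ _ _).2 ⟨hne, Or.inr
        (Finset.mem_insert_of_mem (Finset.mem_erase.2 ⟨hEq, h⟩))⟩).reachable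
open List

lemma chain'_prefix {V : Type*} (v : ℕ → V) (R : V → V → Prop) (m : ℕ)
    (h : ∀ j, j + 1 < m → R (v j) (v (j + 1))) : ((List.range m).map v).Chain' R := by
  simp only [Chain']
  rw [List.isChain_map]
  cases m with
  | zero => simp
  | succ m =>
    rw [List.isChain_range_succ]
    intro j hj
    exact h j (by omega)

lemma getLast?_range_map {V : Type*} (v : ℕ → V) (m : ℕ) :
    ((List.range (m + 1)).map v).getLast? = some (v m) := by
  rw [List.range_succ, List.map_append]
  simp

lemma head?_prefix_append {V : Type*} (v : ℕ → V) (m : ℕ) (x : V) (L : List V)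
    (hx : x = v m) : ((List.range m).map v ++ x :: L).head? = some (v 0) := by
  cases m with
  | zero => simp [hx]
  | succ m =>
    rw [List.head?_append_of_ne_nil _ (by simp)]
    rw [List.range_succ_eq_map]
    simp

lemma head?_dropLast {α : Type*} (l : List α) (h : l.dropLast ≠ []) :
    l.dropLast.head? = l.head? := by
  match l with
  | [] => simp
  | [a] => simp at h
  | a :: b :: r => simp


/-- **Claim 1 of the paper.** Let `B` be an `st`-embracing spanning tree whose
directed `s`-`t` path has vertices `v 0 = s, ..., v k = t` and arcs `f_j = (v (j-1), v j)`.
If `T` is an `st`-embracing spanning tree containing the arcs of `B[s, v_{i-1}]` but not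
`f_i`, then some `e ∈ T` can be exchanged for `f_i` so that `T - e + f_i` is an
`st`-embracing spanning tree containing all arcs of `B[s, v_i]`. -/
theorem claim_one_step {V : Type*} [Fintype V] [DecidableEq V]
    (E B T : Finset (V × V)) (s t : V)
    (hBE : B ⊆ E) (hTE : T ⊆ E)
    (hB : IsSpanningTree B) (hBemb : StEmbracing B s t)
    (hT : IsSpanningTree T) (hTemb : StEmbracing T s t)
    (k : ℕ) (v : ℕ → V) (hv0 : v 0 = s) (hvk : v k = t)
    (hvinj : Set.InjOn v (Set.Iic k))
    (hBpath : ∀ j < k, (v j, v (j + 1)) ∈ B)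
    (i : ℕ) (hi1 : 1 ≤ i) (hik : i ≤ k)
    (hpre : ∀ j < i - 1, (v j, v (j + 1)) ∈ T)
    (hfi : (v (i - 1), v i) ∉ T) :
    ∃ e ∈ T,
      IsSpanningTree (insert (v (i - 1), v i) (T.erase e)) ∧
      StEmbracing (insert (v (i - 1), v i) (T.erase e)) s t ∧
      ∀ j < i, (v j, v (j + 1)) ∈ insert (v (i - 1), v i) (T.erase e) := by
  classical
  have hvij : ∀ j, j ≤ k → j ≠ i → v j ≠ v i := by
    intro j hj hne h
    exact hne (hvinj (Set.mem_Iic.2 hj) (Set.mem_Iic.2 hik) h)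
  have hvne : v (i - 1) ≠ v i := hvij (i - 1) (by omega) (by omega)
  obtain ⟨Q, hQnd, hQh, hQl, hQc⟩ := hTemb
  obtain ⟨hTconn, hTcard, hTprop⟩ := hT
  by_cases hg : (v i, v (i - 1)) ∈ T
  · -- Case I : the reverse arc is in T; exchange it for f_i
    have hmemT' : ∀ r ∈ T, r ≠ (v i, v (i - 1)) →
        r ∈ insert (v (i - 1), v i) (T.erase (v i, v (i - 1))) :=
      fun r hr hne => Finset.mem_insert_of_mem (Finset.mem_erase.2 ⟨hne, hr⟩)
    refine ⟨(v i, v (i - 1)), hg, ⟨?_, ?_, ?_⟩, ?_, ?_⟩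
    · -- connectedness : the two graphs are equal
      have hEq : (SimpleGraph.fromRel fun a b =>
          (a, b) ∈ insert (v (i - 1), v i) (T.erase (v i, v (i - 1)))) =
          SimpleGraph.fromRel (fun a b => (a, b) ∈ T) := by
        ext a b
        simp only [SimpleGraph.fromRel_adj, Finset.mem_insert, Finset.mem_erase,
          Prod.mk.injEq, ne_eq]
        constructor
        · rintro ⟨hab, (⟨rfl, rfl⟩ | ⟨-, h⟩) | (⟨rfl, rfl⟩ | ⟨-, h⟩)⟩
          · exact ⟨hab, Or.inr hg⟩
          · exact ⟨hab, Or.inl h⟩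
          · exact ⟨hab, Or.inl hg⟩
          · exact ⟨hab, Or.inr h⟩
        · rintro ⟨hab, h | h⟩
          · by_cases hE : a = v i ∧ b = v (i - 1)
            · exact ⟨hab, Or.inr (Or.inl ⟨hE.2, hE.1⟩)⟩
            · exact ⟨hab, Or.inl (Or.inr ⟨hE, h⟩)⟩
          · by_cases hE : b = v i ∧ a = v (i - 1)
            · exact ⟨hab, Or.inl (Or.inl ⟨hE.2, hE.1⟩)⟩
            · exact ⟨hab, Or.inr (Or.inr ⟨hE, h⟩)⟩
      rw [hEq]
      exact hTconn
    · exact (card_exchange T _ _ hg hfi).trans hTcard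
    · exact props_exchange T hTprop _ _ _ hvne (Finset.notMem_erase _ _) hfi
    · -- st-embracing
      by_cases hmem : v (i - 1) ∈ Q
      · obtain ⟨Qpre, Qsuf, rfl⟩ := List.append_of_mem hmem
        have hvsuf : v (i - 1) ∉ Qsuf := (List.nodup_cons.1 hQnd.of_append_right).1
        have hWc : ((List.range (i - 1)).map v ++ (v (i - 1) :: Qsuf)).Chain'
            (fun a b => (a, b) ∈ insert (v (i - 1), v i) (T.erase (v i, v (i - 1)))) := by
          refine List.IsChain.append ?_ ?_ ?_
          · refine chain'_prefix v _ _ ?_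
            intro j hj
            refine hmemT' _ (hpre j (by omega)) ?_
            intro hE
            exact hvij j (by omega) (by omega) (congrArg Prod.fst hE)
          · refine (chain'_mem hQc.right_of_append).imp ?_
            rintro a b ⟨hab, -, hb⟩
            refine hmemT' _ hab ?_
            intro hE
            rw [List.tail_cons] at hb
            have hbv : b = v (i - 1) := congrArg Prod.snd hE
            exact hvsuf (hbv ▸ hb)
          · intro a ha b hb
            have hb' : b = v (i - 1) := by simpa using hb.symm
            subst hb'
            rcases Nat.eq_zero_or_pos (i - 1) with h0 | h0
            · rw [h0] at ha; simp at ha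
            · have h2 : i - 1 = (i - 2) + 1 := by omega
              rw [h2, getLast?_range_map] at ha
              have ha' : a = v (i - 2) := by simpa using ha.symm
              subst ha'
              have harc : (v (i - 2), v (i - 2 + 1)) ∈ T := hpre (i - 2) (by omega)
              rw [show i - 2 + 1 = i - 1 by omega] at harc
              refine hmemT' _ harc ?_
              intro hE
              exact hvij (i - 2) (by omega) (by omega) (congrArg Prod.fst hE)
        have hWh : ((List.range (i - 1)).map v ++ (v (i - 1) :: Qsuf)).head? = some s := by
          rw [head?_prefix_append v (i - 1) (v (i - 1)) Qsuf rfl, hv0]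
        have hWl : ((List.range (i - 1)).map v ++ (v (i - 1) :: Qsuf)).getLast? = some t := by
          rw [List.getLast?_append_cons]
          rw [List.getLast?_append_cons] at hQl
          exact hQl
        obtain ⟨p, hp1, hp2, hp3, hp4⟩ := chain'_to_nodup _ _ hWc hWh hWl
        exact ⟨p, hp1, hp2, hp3, hp4⟩
      · refine ⟨Q, hQnd, hQh, hQl, ?_⟩
        refine (chain'_mem hQc).imp ?_
        rintro a b ⟨hab, -, hb⟩
        refine hmemT' _ hab ?_
        intro hE
        have hbv : b = v (i - 1) := congrArg Prod.snd hE
        exact hmem (hbv ▸ List.mem_of_mem_tail hb)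
    · -- the prefix arcs
      intro j hj
      by_cases hj' : j = i - 1
      · subst hj'
        rw [show i - 1 + 1 = i by omega]
        exact Finset.mem_insert_self _ _
      · refine hmemT' _ (hpre j (by omega)) ?_
        intro hE
        exact hvij j (by omega) (by omega) (congrArg Prod.fst hE)
  · -- Case II : the reverse arc is not in T
    have hgE : ∀ e' : V × V, (v i, v (i - 1)) ∉ T.erase e' :=
      fun e' h => hg (Finset.mem_of_mem_erase h)
    by_cases hvQ : v i ∈ Q
    · -- Case IIb : v i lies on the directed s-t path of T
      obtain ⟨Qpre, Qsuf, rfl⟩ := List.append_of_mem hvQ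
      have hQpre_ne : Qpre ≠ [] := by
        intro h
        subst h
        rw [List.nil_append] at hQh
        have hvis : v i = s := by simpa using hQh
        exact hvij 0 (by omega) (by omega) (hv0.trans hvis.symm)
      obtain ⟨w, hwlast⟩ : ∃ w, Qpre.getLast? = some w :=
        ⟨_, List.getLast?_eq_getLast_of_ne_nil hQpre_ne⟩
      have he : (w, v i) ∈ T :=
        (List.isChain_append.1 hQc).2.2 w hwlast (v i) (by simp)
      have hsndne : ∀ (a b : V), b ≠ v i → (a, b) ≠ (w, v i) :=
        fun a b hb hE => hb (congrArg Prod.snd hE)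
      have hmemT' : ∀ r ∈ T, r ≠ (w, v i) →
          r ∈ insert (v (i - 1), v i) (T.erase (w, v i)) :=
        fun r hr hne => Finset.mem_insert_of_mem (Finset.mem_erase.2 ⟨hne, hr⟩)
      have hviQpre : v i ∉ Qpre :=
        fun h => (List.disjoint_of_nodup_append hQnd) h List.mem_cons_self
      have hviQsuf : v i ∉ Qsuf := (List.nodup_cons.1 hQnd.of_append_right).1
      have hprops := props_exchange T hTprop (w, v i) (v (i - 1)) (v i) hvne
        (hgE _) hfi
      have hprop1 : ∀ a ∈ insert (v (i - 1), v i) (T.erase (w, v i)), a.1 ≠ a.2 :=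
        fun a ha => (hprops a ha).1
      refine ⟨(w, v i), he, ⟨?_, ?_, ?_⟩, ?_, ?_⟩
      · -- connectedness
        refine connected_exchange T (w, v i) (v (i - 1), v i) hTconn ?_ hprop1
        have reach1 : (SimpleGraph.fromRel fun a b =>
            (a, b) ∈ insert (v (i - 1), v i) (T.erase (w, v i))).Reachable s w := by
          refine reach_of_chain'_or hprop1 Qpre ?_ ?_ hwlast
          · refine (chain'_mem hQc.left_of_append).imp ?_
            rintro a b ⟨hab, -, hb⟩
            exact Or.inl (hmemT' _ hab (hsndne a b
              (fun h => hviQpre (h ▸ List.mem_of_mem_tail hb))))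
          · rw [List.head?_append_of_ne_nil _ hQpre_ne] at hQh
            exact hQh
        have reach2 : (SimpleGraph.fromRel fun a b =>
            (a, b) ∈ insert (v (i - 1), v i) (T.erase (w, v i))).Reachable s (v (i - 1)) := by
          refine reach_of_chain'_or hprop1 ((List.range ((i - 1) + 1)).map v) ?_ ?_
            (getLast?_range_map v (i - 1))
          · refine chain'_prefix v _ _ ?_
            intro j hj
            exact Or.inl (hmemT' _ (hpre j (by omega))
              (hsndne _ _ (hvij (j + 1) (by omega) (by omega))))
          · rw [List.range_succ_eq_map]
            simp [hv0]
        have reach3 : (SimpleGraph.fromRel fun a b =>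
            (a, b) ∈ insert (v (i - 1), v i) (T.erase (w, v i))).Adj (v (i - 1)) (v i) :=
          (SimpleGraph.fromRel_adj _ _ _).2 ⟨hvne, Or.inl (Finset.mem_insert_self _ _)⟩
        exact (reach1.symm.trans reach2).trans reach3.reachable
      · exact (card_exchange T _ _ he hfi).trans hTcard
      · exact hprops
      · -- st-embracing
        have hWc : ((List.range i).map v ++ (v i :: Qsuf)).Chain'
            (fun a b => (a, b) ∈ insert (v (i - 1), v i) (T.erase (w, v i))) := by
          refine List.IsChain.append ?_ ?_ ?_
          · refine chain'_prefix v _ _ ?_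
            intro j hj
            exact hmemT' _ (hpre j (by omega))
              (hsndne _ _ (hvij (j + 1) (by omega) (by omega)))
          · refine (chain'_mem hQc.right_of_append).imp ?_
            rintro a b ⟨hab, -, hb⟩
            rw [List.tail_cons] at hb
            exact hmemT' _ hab (hsndne _ _ (fun h => hviQsuf (h ▸ hb)))
          · intro a ha b hb
            have hb' : b = v i := by simpa using hb.symm
            subst hb'
            rw [show i = (i - 1) + 1 by omega, getLast?_range_map] at ha
            have ha' : a = v (i - 1) := by simpa using ha.symm
            subst ha'
            exact Finset.mem_insert_self _ _
        have hWh : ((List.range i).map v ++ (v i :: Qsuf)).head? = some s := by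
          rw [head?_prefix_append v i (v i) Qsuf rfl, hv0]
        have hWl : ((List.range i).map v ++ (v i :: Qsuf)).getLast? = some t := by
          rw [List.getLast?_append_cons]
          rw [List.getLast?_append_cons] at hQl
          exact hQl
        obtain ⟨p, hp1, hp2, hp3, hp4⟩ := chain'_to_nodup _ _ hWc hWh hWl
        exact ⟨p, hp1, hp2, hp3, hp4⟩
      · -- prefix arcs
        intro j hj
        by_cases hj' : j = i - 1
        · subst hj'
          rw [show i - 1 + 1 = i by omega]
          exact Finset.mem_insert_self _ _
        · exact hmemT' _ (hpre j (by omega))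
            (hsndne _ _ (hvij (j + 1) (by omega) (by omega)))
    · -- Case IIa : v i does not lie on the directed s-t path of T
      obtain ⟨wk⟩ := hTconn.preconnected (v (i - 1)) (v i)
      obtain ⟨pw, hpw⟩ : ∃ p : (SimpleGraph.fromRel fun a b => (a, b) ∈ T).Walk
          (v (i - 1)) (v i), p.IsPath := ⟨wk.toPath.1, wk.toPath.2⟩
      have hlnd : pw.support.Nodup := hpw.support_nodup
      have hlch : pw.support.Chain' (SimpleGraph.fromRel fun a b => (a, b) ∈ T).Adj :=
        SimpleGraph.Walk.isChain_adj_support pw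
      have hlne : pw.support ≠ [] := SimpleGraph.Walk.support_ne_nil pw
      have hlh : pw.support.head? = some (v (i - 1)) := by
        rw [pw.support_eq_cons]; rfl
      have hgl : pw.support.getLast hlne = v i := pw.getLast_support
      have hll : pw.support.getLast? = some (v i) := by
        rw [List.getLast?_eq_getLast_of_ne_nil hlne, hgl]
      have hlen2 : 2 ≤ pw.support.length := by
        by_contra hc
        push_neg at hc
        have h1 : pw.support.length = 1 := by
          have := List.length_pos_iff.2 hlne
          omega
        obtain ⟨c, hc'⟩ := List.length_eq_one_iff.1 h1
        rw [hc'] at hlh hll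
        simp only [List.head?_cons, Option.some.injEq] at hlh
        simp only [List.getLast?_singleton, Option.some.injEq] at hll
        exact hvne (hlh ▸ hll ▸ rfl)
      have hdne : pw.support.dropLast ≠ [] := by
        intro h
        have h2 : pw.support.dropLast.length = pw.support.length - 1 :=
          List.length_dropLast
        rw [h] at h2
        simp only [List.length_nil] at h2
        omega
      obtain ⟨x, hxlast⟩ : ∃ x, pw.support.dropLast.getLast? = some x :=
        ⟨_, List.getLast?_eq_getLast_of_ne_nil hdne⟩
      have hsplit : pw.support.dropLast ++ [v i] = pw.support := by
        have h1 := List.dropLast_append_getLast hlne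
        rw [hgl] at h1
        exact h1
      have hlch2 : (pw.support.dropLast ++ [v i]).Chain'
          (SimpleGraph.fromRel fun a b => (a, b) ∈ T).Adj := by
        rw [hsplit]; exact hlch
      have hjun := (List.isChain_append.1 hlch2).2.2 x hxlast (v i) (by simp)
      rw [SimpleGraph.fromRel_adj] at hjun
      obtain ⟨e', he'T, hco⟩ : ∃ e', e' ∈ T ∧ (e' = (x, v i) ∨ e' = (v i, x)) := by
        rcases hjun.2 with h | h
        · exact ⟨_, h, Or.inl rfl⟩
        · exact ⟨_, h, Or.inr rfl⟩
      have hnotE : ∀ r : V × V, r.1 ≠ v i → r.2 ≠ v i → r ≠ e' := by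
        intro r h1 h2 hr
        rcases hco with h | h
        · exact h2 (congrArg Prod.snd (hr.trans h))
        · exact h1 (congrArg Prod.fst (hr.trans h))
      have hmemT' : ∀ r ∈ T, r ≠ e' → r ∈ insert (v (i - 1), v i) (T.erase e') :=
        fun r hr hne => Finset.mem_insert_of_mem (Finset.mem_erase.2 ⟨hne, hr⟩)
      have hprops := props_exchange T hTprop e' (v (i - 1)) (v i) hvne (hgE _) hfi
      have hprop1 : ∀ a ∈ insert (v (i - 1), v i) (T.erase e'), a.1 ≠ a.2 :=
        fun a ha => (hprops a ha).1
      have hvid : v i ∉ pw.support.dropLast := by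
        have hnd2 : (pw.support.dropLast ++ [v i]).Nodup := by rw [hsplit]; exact hlnd
        exact fun h => (List.disjoint_of_nodup_append hnd2) h (by simp)
      refine ⟨e', he'T, ⟨?_, ?_, ?_⟩, ?_, ?_⟩
      · -- connectedness
        refine connected_exchange T e' (v (i - 1), v i) hTconn ?_ hprop1
        have hreachdx : (SimpleGraph.fromRel fun a b =>
            (a, b) ∈ insert (v (i - 1), v i) (T.erase e')).Reachable (v (i - 1)) x := by
          refine reach_of_chain'_or hprop1 pw.support.dropLast ?_ ?_ hxlast
          · have hch : pw.support.dropLast.Chain'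
                (SimpleGraph.fromRel fun a b => (a, b) ∈ T).Adj := hlch2.left_of_append
            refine (chain'_mem hch).imp ?_
            rintro a b ⟨hab, ha, hb⟩
            have hbd : b ∈ pw.support.dropLast := List.mem_of_mem_tail hb
            rw [SimpleGraph.fromRel_adj] at hab
            rcases hab.2 with h | h
            · exact Or.inl (hmemT' _ h (hnotE _
                (show a ≠ v i from fun hc => hvid (hc ▸ ha))
                (show b ≠ v i from fun hc => hvid (hc ▸ hbd))))
            · exact Or.inr (hmemT' _ h (hnotE _
                (show b ≠ v i from fun hc => hvid (hc ▸ hbd))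
                (show a ≠ v i from fun hc => hvid (hc ▸ ha))))
          · rw [head?_dropLast _ hdne]
            exact hlh
        have hadjf : (SimpleGraph.fromRel fun a b =>
            (a, b) ∈ insert (v (i - 1), v i) (T.erase e')).Adj (v (i - 1)) (v i) :=
          (SimpleGraph.fromRel_adj _ _ _).2 ⟨hvne, Or.inl (Finset.mem_insert_self _ _)⟩
        have hxvi : (SimpleGraph.fromRel fun a b =>
            (a, b) ∈ insert (v (i - 1), v i) (T.erase e')).Reachable x (v i) :=
          hreachdx.symm.trans hadjf.reachable
        rcases hco with h | h
        · subst h; exact hxvi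
        · subst h; exact hxvi.symm
      · exact (card_exchange T _ _ he'T hfi).trans hTcard
      · exact hprops
      · -- st-embracing : Q avoids v i, hence avoids e'
        refine ⟨Q, hQnd, hQh, hQl, ?_⟩
        refine (chain'_mem hQc).imp ?_
        rintro a b ⟨hab, ha, hb⟩
        exact hmemT' _ hab (hnotE _
          (show a ≠ v i from fun hc => hvQ (hc ▸ ha))
          (show b ≠ v i from fun hc => hvQ (hc ▸ List.mem_of_mem_tail hb)))
      · -- prefix arcs
        intro j hj
        by_cases hj' : j = i - 1
        · subst hj'
          rw [show i - 1 + 1 = i by omega]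
          exact Finset.mem_insert_self _ _
        · exact hmemT' _ (hpre j (by omega)) (hnotE _
            (show v j ≠ v i from hvij j (by omega) (by omega))
            (show v (j + 1) ≠ v i from hvij (j + 1) (by omega) (by omega)))
end

section
/- Let T be a spanning tree of a directed graph D such that T contains a directed path P from s to some vertex x and a directed path Q from x to t. Then the unique tree path T[s,t] is a directed s-t path, i.e., T is st-embracing. -/

lemma exists_nodup_chain'_of_chain' {V : Type*} (R : V → V → Prop) (n : ℕ) :
    ∀ p : List V, p.length ≤ n → p.Chain' R → ∀ s t : V, p.head? = some s → p.getLast? = some t →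
      ∃ q : List V, q.Nodup ∧ q.head? = some s ∧ q.getLast? = some t ∧ q.Chain' R := by
  induction n using Nat.strong_induction_on with
  | _ n ih =>
  intro p hlen hc s t hh hl
  by_cases hnd : p.Nodup
  · exact ⟨p, hnd, hh, hl, hc⟩
  · rw [List.nodup_iff_injective_get] at hnd
    simp only [Function.Injective, not_forall] at hnd
    obtain ⟨i', j', hij', hne⟩ := hnd
    obtain ⟨i, j, hlt, hij⟩ : ∃ i j : Fin p.length, i < j ∧ p.get i = p.get j := by
      rcases lt_or_gt_of_ne (show i' ≠ j' from fun h => hne h) with h | h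
      · exact ⟨i', j', h, hij'⟩
      · exact ⟨j', i', h, hij'.symm⟩
    clear hij' hne i' j'
    set q : List V := p.take (i + 1) ++ p.drop (j + 1) with hq
    have hiL : (i : ℕ) < p.length := i.isLt
    have hjL : (j : ℕ) < p.length := j.isLt
    have hlt' : (i : ℕ) < (j : ℕ) := hlt
    have htake_ne : p.take ((i : ℕ) + 1) ≠ [] := by
      intro hnil
      have : (p.take ((i:ℕ)+1)).length = 0 := by rw [hnil]; rfl
      rw [List.length_take] at this; omega
    have hplen : q.length < p.length := by
      simp only [hq, List.length_append, List.length_take, List.length_drop]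
      omega
    have htake_last : (p.take ((i:ℕ) + 1)).getLast? = some (p.get i) := by
      rw [List.getLast?_eq_getElem?]
      simp [List.length_take, Nat.min_eq_left (by omega : (i:ℕ) + 1 ≤ p.length),
        List.getElem?_take, List.getElem?_eq_getElem hiL]
    have hchain_take : (p.take ((i:ℕ) + 1)).Chain' R := hc.prefix (List.take_prefix _ _)
    have hchain_drop : (p.drop ((j:ℕ) + 1)).Chain' R := hc.suffix (List.drop_suffix _ _)
    have hcq : q.Chain' R := by
      rw [hq, List.Chain', List.isChain_append]
      refine ⟨hchain_take, hchain_drop, ?_⟩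
      intro a ha b hb
      rw [htake_last, Option.mem_def, Option.some.injEq] at ha
      subst ha
      rw [List.head?_eq_getElem?, List.getElem?_drop] at hb
      have hbj : (j : ℕ) + 1 + 0 < p.length := by
        by_contra hcon
        rw [List.getElem?_eq_none (by omega)] at hb
        simp at hb
      rw [List.getElem?_eq_getElem hbj, Option.mem_def, Option.some.injEq] at hb
      subst hb
      rw [hij]
      have := List.isChain_iff_getElem.mp hc j (by omega)
      simpa using this
    have hqh : q.head? = some s := by
      rw [hq, List.head?_append_of_ne_nil _ htake_ne, ← hh]
      cases p with
      | nil => simp at hh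
      | cons a l => simp
    have hql : q.getLast? = some t := by
      by_cases hd : p.drop ((j:ℕ) + 1) = []
      · have hjlast : (j : ℕ) = p.length - 1 := by
          have : (p.drop ((j:ℕ)+1)).length = 0 := by rw [hd]; rfl
          rw [List.length_drop] at this; omega
        rw [hq, hd, List.append_nil, htake_last, hij]
        rw [List.getLast?_eq_getElem?] at hl
        rw [← hl]
        rw [List.get_eq_getElem, List.getElem?_eq_getElem (by omega)]
        simp only [hjlast]
      · rw [hq, List.getLast?_append_of_ne_nil _ hd, ← hl]
        conv_rhs => rw [← List.take_append_drop ((j:ℕ)+1) p]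
        rw [List.getLast?_append_of_ne_nil _ hd]
    exact ih q.length (by omega) q le_rfl hcq s t hqh hql

/-- If a spanning tree `T` contains a directed path from `s` to some vertex
`x` and a directed path from `x` to `t`, then the unique tree path from `s` to `t` in `T` is a
directed `s`-`t` path, i.e. `T` is `st`-embracing. -/
theorem stEmbracing_of_paths_through {V : Type*} [Fintype V] [DecidableEq V]
    (T : Finset (V × V)) (hT : IsSpanningTree T) (s x t : V)
    (P Q : List V) (hP : IsDiPath T s x P) (hQ : IsDiPath T x t Q) :
    StEmbracing T s t := by
  obtain ⟨hPnd, hPh, hPl, hPc⟩ := hP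
  obtain ⟨hQnd, hQh, hQl, hQc⟩ := hQ
  set R : V → V → Prop := fun a b => (a, b) ∈ T with hR
  have hQcons : Q = x :: Q.tail := List.eq_cons_of_mem_head? (by rw [hQh]; rfl)
  have hPne : P ≠ [] := by intro h; rw [h] at hPh; simp at hPh
  set W : List V := P ++ Q.tail with hW
  have hWc : W.Chain' R := by
    rw [hW, List.Chain', List.isChain_append]
    have := hQc
    rw [hQcons, List.Chain', List.isChain_cons] at this
    refine ⟨hPc, this.2, ?_⟩
    intro a ha b hb
    rw [hPl, Option.mem_def, Option.some.injEq] at ha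
    subst ha
    exact this.1 b hb
  have hWh : W.head? = some s := by
    rw [hW, List.head?_append_of_ne_nil _ hPne, hPh]
  have hWl : W.getLast? = some t := by
    by_cases hd : Q.tail = []
    · have : Q = [x] := by rw [hQcons, hd]
      rw [this] at hQl
      simp only [List.getLast?_singleton, Option.some.injEq] at hQl
      rw [hW, hd, List.append_nil, hPl, hQl]
    · rw [hW, List.getLast?_append_of_ne_nil _ hd, ← hQl]
      conv_rhs => rw [hQcons, show x :: Q.tail = [x] ++ Q.tail from rfl]
      rw [List.getLast?_append_of_ne_nil _ hd]
  obtain ⟨q, hq1, hq2, hq3, hq4⟩ :=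
    exists_nodup_chain'_of_chain' R W.length W le_rfl hWc s t hWh hWl
  exact ⟨q, hq1, hq2, hq3, hq4⟩
end

section
/- Let D be a directed graph with two st-embracing spanning trees A' and B such that the directed paths A'[s,t] and B[s,t] coincide (as arc sets). Then for every arc e ∈ A' \ B there exists f ∈ B \ A' such that (A' \ {e}) ∪ {f} is a spanning tree whose s-t tree path is still the same directed path; consequently A' can be transformed into B by exactly |B \ A'| single-arc exchanges, all intermediate trees being st-embracing. -/
open SimpleGraph Finset

section Aux

/-- A connected graph given by an arc set has at least `|V| - 1` arcs. -/
lemma conn_card_le {V : Type*} [Fintype V] [DecidableEq V] (T : Finset (V × V))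
    (hconn : (SimpleGraph.fromRel (fun a b => (a, b) ∈ T)).Connected) :
    Fintype.card V ≤ T.card + 1 := by
  classical
  set G := SimpleGraph.fromRel (fun a b : V => (a, b) ∈ T) with hG
  obtain ⟨r⟩ := hconn.nonempty
  have key : ∀ v : V, ∃ au : (V × V) × V, v ≠ r →
      au.1 ∈ T ∧ (au.1 = (v, au.2) ∨ au.1 = (au.2, v)) ∧ G.dist au.2 r < G.dist v r := by
    intro v
    by_cases hv : v = r
    · exact ⟨((r, r), r), fun h => absurd hv h⟩
    · have hreach : G.Reachable v r := hconn.preconnected v r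
      obtain ⟨w, hw⟩ := hreach.exists_walk_length_eq_dist
      have hpos : 0 < G.dist v r := hreach.pos_dist_of_ne hv
      cases w with
      | nil => exact absurd rfl hv
      | @cons _ u _ hadj w' =>
        have hle : G.dist u r ≤ w'.length := G.dist_le w'
        have hlen : w'.length + 1 = G.dist v r := by simpa using hw
        rw [hG, SimpleGraph.fromRel_adj] at hadj
        rcases hadj.2 with h | h
        · exact ⟨((v, u), u), fun _ => ⟨h, Or.inl rfl, show G.dist u r < G.dist v r by omega⟩⟩
        · exact ⟨((u, v), u), fun _ => ⟨h, Or.inr rfl, show G.dist u r < G.dist v r by omega⟩⟩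
  choose g hg using key
  have hinj : Set.InjOn (fun v => (g v).1) ↑(Finset.univ.erase r) := by
    intro v hv v' hv' heq
    simp only [Finset.coe_erase, Set.mem_diff, Finset.mem_coe, Finset.mem_univ,
      Set.mem_singleton_iff] at hv hv'
    obtain ⟨h1, h2, h3⟩ := hg v hv.2
    obtain ⟨h1', h2', h3'⟩ := hg v' hv'.2
    by_contra hne
    have heq' : (g v).1 = (g v').1 := heq
    rcases h2 with h2 | h2 <;> rcases h2' with h2' | h2' <;>
      rw [h2, h2'] at heq' <;> simp only [Prod.mk.injEq] at heq'
    · exact hne heq'.1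
    · obtain ⟨ha, hb⟩ := heq'; rw [hb] at h3; rw [← ha] at h3'; omega
    · obtain ⟨ha, hb⟩ := heq'; rw [ha] at h3; rw [← hb] at h3'; omega
    · exact hne heq'.2
  have hcard := Finset.card_le_card_of_injOn (fun v => (g v).1)
    (fun v hv => (hg v (Finset.mem_erase.mp hv).1).1) hinj
  have h1 : (Finset.univ.erase r).card = Fintype.card V - 1 := by
    rw [Finset.card_erase_of_mem (Finset.mem_univ r), Finset.card_univ]
  have h2 : 0 < Fintype.card V := Fintype.card_pos_iff.mpr ⟨r⟩
  omega

/-- Splitting reachability along one distinguished edge. -/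
lemma reachable_split {V : Type*} {G G' : SimpleGraph V} {a b : V}
    (h : ∀ x y, G.Adj x y → G'.Adj x y ∨ (x = a ∧ y = b) ∨ (x = b ∧ y = a)) :
    ∀ {u v : V}, G.Reachable u v →
      G'.Reachable u v ∨ (G'.Reachable u a ∧ G'.Reachable b v) ∨
        (G'.Reachable u b ∧ G'.Reachable a v) := by
  intro u v huv
  obtain ⟨w⟩ := huv
  induction w with
  | nil => exact Or.inl (Reachable.refl _)
  | @cons u x v hadj w ih =>
    rcases h _ _ hadj with h' | ⟨rfl, rfl⟩ | ⟨rfl, rfl⟩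
    · rcases ih with h2 | ⟨h2, h3⟩ | ⟨h2, h3⟩
      · exact Or.inl (h'.reachable.trans h2)
      · exact Or.inr (Or.inl ⟨h'.reachable.trans h2, h3⟩)
      · exact Or.inr (Or.inr ⟨h'.reachable.trans h2, h3⟩)
    · rcases ih with h2 | ⟨h2, h3⟩ | ⟨h2, h3⟩
      · exact Or.inr (Or.inl ⟨Reachable.refl _, h2⟩)
      · exact Or.inr (Or.inl ⟨Reachable.refl _, h3⟩)
      · exact Or.inl h3
    · rcases ih with h2 | ⟨h2, h3⟩ | ⟨h2, h3⟩
      · exact Or.inr (Or.inr ⟨Reachable.refl _, h2⟩)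
      · exact Or.inl h3
      · exact Or.inr (Or.inr ⟨Reachable.refl _, h3⟩)

/-- A walk from inside `S` to outside `S` crosses the boundary of `S`. -/
lemma exists_cross {V : Type*} {H : SimpleGraph V} {S : Set V} :
    ∀ {u v : V}, H.Walk u v → u ∈ S → v ∉ S → ∃ x y, H.Adj x y ∧ x ∈ S ∧ y ∉ S := by
  intro u v w
  induction w with
  | nil => exact fun h h' => absurd h h'
  | @cons u x v hadj w ih =>
    intro hu hv
    by_cases hx : x ∈ S
    · exact ih hx hv
    · exact ⟨u, x, hadj, hu, hx⟩

lemma chain'_and {α : Type*} {R S : α → α → Prop} {l : List α}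
    (h1 : l.Chain' R) (h2 : l.Chain' S) : l.Chain' (fun a b => R a b ∧ S a b) := by
  simp only [List.Chain'] at *
  rw [List.isChain_iff_getElem] at *
  exact fun i h => ⟨h1 i h, h2 i h⟩

/-- The common directed `s`-`t` path survives the exchange of `e` for `f`. -/
lemma dipath_exchange {V : Type*} [DecidableEq V] {A' B : Finset (V × V)} {s t : V}
    {p : List V} (hpA : IsDiPath A' s t p) (hpB : IsDiPath B s t p) {e f : V × V}
    (heB : e ∉ B) : IsDiPath (insert f (A'.erase e)) s t p := by
  obtain ⟨h1, h2, h3, h4⟩ := hpA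
  refine ⟨h1, h2, h3, ?_⟩
  refine (chain'_and h4 hpB.2.2.2).imp (fun a b h => ?_)
  exact Finset.mem_insert_of_mem
    (Finset.mem_erase.mpr ⟨fun hh => heB (by rw [← hh]; exact h.2), h.1⟩)

/-- Basis exchange for the graphic matroid, in the arc-set setting. -/
lemma exchange {V : Type*} [Fintype V] [DecidableEq V] (A' B : Finset (V × V))
    (hA : IsSpanningTree A') (hB : IsSpanningTree B) (e : V × V)
    (heA : e ∈ A') (heB : e ∉ B) :
    ∃ f ∈ B \ A', IsSpanningTree (insert f (A'.erase e)) := by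
  classical
  obtain ⟨hconnA, hcardA, horA⟩ := hA
  obtain ⟨hconnB, hcardB, horB⟩ := hB
  set G := SimpleGraph.fromRel (fun a b : V => (a, b) ∈ A') with hGdef
  set G' := SimpleGraph.fromRel (fun a b : V => (a, b) ∈ A'.erase e) with hG'def
  have hsplit : ∀ x y, G.Adj x y → G'.Adj x y ∨ (x = e.1 ∧ y = e.2) ∨ (x = e.2 ∧ y = e.1) := by
    intro x y hxy
    rw [hGdef, SimpleGraph.fromRel_adj] at hxy
    obtain ⟨hxyne, harc⟩ := hxy
    rcases harc with h | h
    · by_cases hxe : (x, y) = e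
      · exact Or.inr (Or.inl ⟨congrArg Prod.fst hxe, congrArg Prod.snd hxe⟩)
      · refine Or.inl ?_
        rw [hG'def, SimpleGraph.fromRel_adj]
        exact ⟨hxyne, Or.inl (Finset.mem_erase.mpr ⟨hxe, h⟩)⟩
    · by_cases hxe : (y, x) = e
      · exact Or.inr (Or.inr ⟨congrArg Prod.snd hxe, congrArg Prod.fst hxe⟩)
      · refine Or.inl ?_
        rw [hG'def, SimpleGraph.fromRel_adj]
        exact ⟨hxyne, Or.inr (Finset.mem_erase.mpr ⟨hxe, h⟩)⟩
  set S : Set V := {v | G'.Reachable e.1 v} with hSdef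
  have hsplitall : ∀ v : V, v ∈ S ∨ G'.Reachable e.2 v := by
    intro v
    rcases reachable_split hsplit (hconnA.preconnected e.1 v) with h | ⟨h1, h2⟩ | ⟨h1, h2⟩
    · exact Or.inl h
    · exact Or.inr h2
    · exact Or.inl h2
  have hS_adj : ∀ x y, G'.Adj x y → (x ∈ S ↔ y ∈ S) := by
    intro x y hxy
    exact ⟨fun h => h.trans hxy.reachable, fun h => h.trans hxy.symm.reachable⟩
  have hcardV : 2 ≤ Fintype.card V := by
    have : 1 ≤ A'.card := Finset.card_pos.mpr ⟨e, heA⟩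
    omega
  have he2S : e.2 ∉ S := by
    intro h12
    have hall : ∀ v, v ∈ S := by
      intro v
      rcases hsplitall v with h | h
      · exact h
      · exact h12.trans h
    have hconn' : G'.Connected := by
      rw [connected_iff]
      exact ⟨fun v w => (hall v).symm.trans (hall w), ⟨e.1⟩⟩
    have := conn_card_le (A'.erase e) hconn'
    rw [Finset.card_erase_of_mem heA] at this
    omega
  have he1S : e.1 ∈ S := Reachable.refl _
  have claim : ∀ x y : V, ((x ∈ S ∧ y ∉ S) ∨ (y ∈ S ∧ x ∉ S)) → (x, y) ∈ B →
      ∃ f ∈ B \ A', IsSpanningTree (insert f (A'.erase e)) := by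
    intro x y hS hfB
    have hxyne : x ≠ y := by rintro rfl; rcases hS with ⟨h1, h2⟩ | ⟨h1, h2⟩ <;> exact h2 h1
    have hnoadj : ¬ G'.Adj x y := by
      intro h
      have := hS_adj x y h
      rcases hS with ⟨h1, h2⟩ | ⟨h1, h2⟩
      · exact h2 (this.mp h1)
      · exact h2 (this.mpr h1)
    have hfAe : (x, y) ∉ A'.erase e := fun h =>
      hnoadj (by rw [hG'def, SimpleGraph.fromRel_adj]; exact ⟨hxyne, Or.inl h⟩)
    have hrevAe : (y, x) ∉ A'.erase e := fun h =>
      hnoadj (by rw [hG'def, SimpleGraph.fromRel_adj]; exact ⟨hxyne, Or.inr h⟩)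
    have hfA : (x, y) ∉ A' := by
      intro h
      have hxe : (x, y) ≠ e := by rintro rfl; exact heB hfB
      exact hfAe (Finset.mem_erase.mpr ⟨hxe, h⟩)
    refine ⟨(x, y), Finset.mem_sdiff.mpr ⟨hfB, hfA⟩, ?_, ?_, ?_⟩
    · set G'' := SimpleGraph.fromRel
        (fun a b : V => (a, b) ∈ insert (x, y) (A'.erase e)) with hG''def
      have hle : G' ≤ G'' := by
        intro u w h
        rw [hG'def, SimpleGraph.fromRel_adj] at h
        rw [hG''def, SimpleGraph.fromRel_adj]
        exact ⟨h.1, h.2.imp Finset.mem_insert_of_mem Finset.mem_insert_of_mem⟩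
      have reach1 : ∀ v ∈ S, G''.Reachable e.1 v := fun v hv => Reachable.mono hle hv
      have reach2 : ∀ v, v ∉ S → G''.Reachable e.2 v := by
        intro v hv
        rcases hsplitall v with h | h
        · exact absurd h hv
        · exact Reachable.mono hle h
      have hadjxy : G''.Adj x y := by
        rw [hG''def, SimpleGraph.fromRel_adj]
        exact ⟨hxyne, Or.inl (Finset.mem_insert_self _ _)⟩
      have h12 : G''.Reachable e.1 e.2 := by
        rcases hS with ⟨hx, hy⟩ | ⟨hy, hx⟩
        · exact ((reach1 x hx).trans hadjxy.reachable).trans (reach2 y hy).symm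
        · exact ((reach1 y hy).trans hadjxy.symm.reachable).trans (reach2 x hx).symm
      have hallv : ∀ v, G''.Reachable e.1 v := by
        intro v
        rcases hsplitall v with h | h
        · exact Reachable.mono hle h
        · exact h12.trans (Reachable.mono hle h)
      rw [connected_iff]
      exact ⟨fun v w => (hallv v).symm.trans (hallv w), ⟨e.1⟩⟩
    · rw [Finset.card_insert_of_notMem hfAe, Finset.card_erase_of_mem heA, hcardA]
      omega
    · intro a ha
      rcases Finset.mem_insert.mp ha with rfl | ha'
      · refine ⟨hxyne, fun hmem => ?_⟩
        rcases Finset.mem_insert.mp hmem with h | h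
        · have hyx : y = x := congrArg Prod.fst h
          exact hxyne hyx.symm
        · exact hrevAe h
      · have haA : a ∈ A' := Finset.mem_of_mem_erase ha'
        refine ⟨(horA a haA).1, fun hmem => ?_⟩
        rcases Finset.mem_insert.mp hmem with h | h
        · have hax : a = (y, x) := by
            have h1 := congrArg Prod.fst h
            have h2 := congrArg Prod.snd h
            simp at h1 h2
            exact Prod.ext h2 h1
          rw [hax] at ha'
          exact hrevAe ha'
        · exact (horA a haA).2 (Finset.mem_of_mem_erase h)
  obtain ⟨w⟩ := hconnB.preconnected e.1 e.2
  obtain ⟨x, y, hadj, hx, hy⟩ := exists_cross w he1S he2S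
  rw [SimpleGraph.fromRel_adj] at hadj
  rcases hadj.2 with h | h
  · exact claim x y (Or.inl ⟨hx, hy⟩) h
  · exact claim y x (Or.inr ⟨hx, hy⟩) h

/-- The inductive second phase. -/
lemma phase {V : Type*} [Fintype V] [DecidableEq V] (E B : Finset (V × V)) (s t : V)
    (hBE : B ⊆ E) (hB : IsSpanningTree B) (p : List V) (hpB : IsDiPath B s t p) :
    ∀ (n : ℕ) (A' : Finset (V × V)), (B \ A').card = n → A' ⊆ E → IsSpanningTree A' →
      IsDiPath A' s t p →
      ∃ T : ℕ → Finset (V × V), T 0 = A' ∧ T n = B ∧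
        (∀ i ≤ n, T i ⊆ E ∧ IsSpanningTree (T i) ∧ StEmbracing (T i) s t) ∧
        (∀ i < n, (symmDiff (T i) (T (i + 1))).card = 2) := by
  intro n
  induction n with
  | zero =>
    intro A' hcard hAE hA hpA
    have hsub : B ⊆ A' := by
      rw [← Finset.sdiff_eq_empty_iff_subset]
      exact Finset.card_eq_zero.mp hcard
    have hBA : B = A' := Finset.eq_of_subset_of_card_le hsub (by rw [hA.2.1, hB.2.1])
    exact ⟨fun _ => A', rfl, hBA.symm, fun i _ => ⟨hAE, hA, ⟨p, hpA⟩⟩,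
      fun i hi => absurd hi (Nat.not_lt_zero i)⟩
  | succ n ih =>
    intro A' hcard hAE hA hpA
    have hcards : A'.card = B.card := by rw [hA.2.1, hB.2.1]
    have hdiff : 0 < (A' \ B).card := by
      have h1 := Finset.card_sdiff_add_card_inter A' B
      have h2 := Finset.card_sdiff_add_card_inter B A'
      rw [Finset.inter_comm] at h2
      omega
    obtain ⟨e, he⟩ := Finset.card_pos.mp hdiff
    rw [Finset.mem_sdiff] at he
    obtain ⟨f, hf, htree⟩ := exchange A' B hA hB e he.1 he.2
    set A'' := insert f (A'.erase e) with hA''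
    have hpA'' : IsDiPath A'' s t p := dipath_exchange hpA hpB he.2
    have hfB : f ∈ B := (Finset.mem_sdiff.mp hf).1
    have hfA : f ∉ A' := (Finset.mem_sdiff.mp hf).2
    have hef : e ≠ f := fun h => hfA (h ▸ he.1)
    have hA''E : A'' ⊆ E := by
      rw [hA'']
      exact Finset.insert_subset (hBE hfB) ((Finset.erase_subset _ _).trans hAE)
    have hBd : B \ A'' = (B \ A').erase f := by
      ext x
      simp only [Finset.mem_sdiff, Finset.mem_erase, hA'', Finset.mem_insert]
      constructor
      · rintro ⟨hxB, hx⟩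
        refine ⟨fun hxf => hx (Or.inl hxf), hxB, fun hxA => ?_⟩
        by_cases hxe : x = e
        · rw [hxe] at hxB; exact he.2 hxB
        · exact hx (Or.inr ⟨hxe, hxA⟩)
      · rintro ⟨hxf, hxB, hxA⟩
        exact ⟨hxB, fun h => h.elim hxf (fun h' => hxA h'.2)⟩
    have hcard'' : (B \ A'').card = n := by
      rw [hBd, Finset.card_erase_of_mem hf, hcard]
      omega
    obtain ⟨T', hT0, hTn, hTi, hTd⟩ := ih A'' hcard'' hA''E htree hpA''
    refine ⟨fun i => Nat.casesOn i A' (fun k => T' k), rfl, hTn, ?_, ?_⟩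
    · intro i hi
      cases i with
      | zero => exact ⟨hAE, hA, ⟨p, hpA⟩⟩
      | succ k => exact hTi k (by omega)
    · intro i hi
      cases i with
      | zero =>
        show (symmDiff A' (T' 0)).card = 2
        rw [hT0]
        have hsd : symmDiff A' A'' = {e, f} := by
          ext x
          simp only [Finset.mem_symmDiff, hA'', Finset.mem_insert, Finset.mem_erase,
            Finset.mem_singleton]
          constructor
          · rintro (⟨hxA, hx⟩ | ⟨hx, hxA⟩)
            · left
              by_contra hxe
              exact hx (Or.inr ⟨hxe, hxA⟩)
            · rcases hx with hx | hx
              · exact Or.inr hx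
              · exact absurd hx.2 hxA
          · rintro (rfl | rfl)
            · exact Or.inl ⟨he.1, fun h => h.elim (fun h' => hef h') (fun h' => h'.1 rfl)⟩
            · exact Or.inr ⟨Or.inl rfl, hfA⟩
        rw [hsd]
        rw [Finset.card_insert_of_notMem (by simpa using hef), Finset.card_singleton]
      | succ k =>
        exact hTd k (by omega)

end Aux

/-- If `A'` and `B` are `st`-embracing spanning trees whose directed
`s`-`t` paths coincide (witnessed by the common path `p`), then every `e ∈ A' \ B` admits
`f ∈ B \ A'` such that `(A' \ {e}) ∪ {f}` is a spanning tree with the same directed `s`-`t`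
path; consequently `A'` can be transformed into `B` in exactly `|B \ A'|` single-arc
exchanges through `st`-embracing spanning trees. -/
theorem second_phase {V : Type*} [Fintype V] [DecidableEq V]
    (E A' B : Finset (V × V)) (s t : V)
    (hAE : A' ⊆ E) (hBE : B ⊆ E)
    (hA : IsSpanningTree A') (hB : IsSpanningTree B)
    (p : List V) (hpA : IsDiPath A' s t p) (hpB : IsDiPath B s t p) :
    (∀ e ∈ A' \ B, ∃ f ∈ B \ A',
        IsSpanningTree (insert f (A'.erase e)) ∧
        IsDiPath (insert f (A'.erase e)) s t p) ∧
    ∃ T : ℕ → Finset (V × V), T 0 = A' ∧ T ((B \ A').card) = B ∧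
      (∀ i ≤ (B \ A').card, T i ⊆ E ∧ IsSpanningTree (T i) ∧ StEmbracing (T i) s t) ∧
      (∀ i < (B \ A').card, (symmDiff (T i) (T (i + 1))).card = 2) := by
  constructor
  · intro e he
    rw [Finset.mem_sdiff] at he
    obtain ⟨f, hf, htree⟩ := exchange A' B hA hB e he.1 he.2
    exact ⟨f, hf, htree, dipath_exchange hpA hpB he.2⟩
  · exact phase E B s t hBE hB p hpB _ A' rfl hAE hA hpA
end

section
/- In the oriented matroid of affine point configurations in the plane: let u, x, y, v, w, z be six points on the unit circle in this clockwise order, such that the triangles A = {u, v, w} and B = {x, y, z} both contain the origin in their interiors, and the diameter through w meets the circle again at a point strictly between u and x. Then the only pair (a, b) with a ∈ A, b ∈ B such that both (A \ {a}) ∪ {b} and (B \ {b}) ∪ {a} contain the origin in their convex hulls is (a, b) = (v, y). -/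
/-- The point of the unit circle in the plane at angle `θ` (measured counterclockwise). -/
noncomputable def circlePt (θ : ℝ) : ℝ × ℝ := (Real.cos θ, Real.sin θ)


lemma circlePt_sub_two_pi (α : ℝ) : circlePt (α - 2 * Real.pi) = circlePt α := by
  simp [circlePt, Real.cos_sub_two_pi, Real.sin_sub_two_pi]

lemma circlePt_add_two_pi (α : ℝ) : circlePt (α + 2 * Real.pi) = circlePt α := by
  simp [circlePt, Real.cos_add_two_pi, Real.sin_add_two_pi]

lemma not_mem_hull {S : Set (ℝ × ℝ)} {θ : ℝ}
    (h : ∀ p ∈ S, ∃ α, p = circlePt α ∧ θ < α ∧ α < θ + Real.pi) :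
    (0 : ℝ × ℝ) ∉ convexHull ℝ S := by
  set f : ℝ × ℝ → ℝ := fun p => -Real.sin θ * p.1 + Real.cos θ * p.2 with hf
  have hlin : IsLinearMap ℝ f := by
    constructor
    · intro p q; simp [hf]; ring
    · intro c p; simp [hf, Prod.smul_fst, Prod.smul_snd, smul_eq_mul]; ring
  have hconv : Convex ℝ {p : ℝ × ℝ | 0 < f p} := convex_halfSpace_gt hlin 0
  have hsub : S ⊆ {p : ℝ × ℝ | 0 < f p} := by
    intro p hp
    obtain ⟨α, rfl, hα1, hα2⟩ := h p hp
    show 0 < f (circlePt α)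
    have hfe : f (circlePt α) = Real.sin (α - θ) := by
      simp [hf, circlePt, Real.sin_sub]; ring
    rw [hfe]
    exact Real.sin_pos_of_pos_of_lt_pi (by linarith) (by linarith)
  intro h0
  have := convexHull_min hsub hconv h0
  simp only [Set.mem_setOf_eq, hf] at this
  norm_num at this

lemma not_interior_hull {S : Set (ℝ × ℝ)} {θ : ℝ}
    (h : ∀ p ∈ S, ∃ α, p = circlePt α ∧ θ ≤ α ∧ α ≤ θ + Real.pi) :
    (0 : ℝ × ℝ) ∉ interior (convexHull ℝ S) := by
  intro h0
  set f : ℝ × ℝ → ℝ := fun p => -Real.sin θ * p.1 + Real.cos θ * p.2 with hf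
  have hlin : IsLinearMap ℝ f := by
    constructor
    · intro p q; simp [hf]; ring
    · intro c p; simp [hf, Prod.smul_fst, Prod.smul_snd, smul_eq_mul]; ring
  have hconv : Convex ℝ {p : ℝ × ℝ | 0 ≤ f p} := convex_halfSpace_ge hlin 0
  have hsub : convexHull ℝ S ⊆ {p : ℝ × ℝ | 0 ≤ f p} := by
    apply convexHull_min _ hconv
    intro p hp
    obtain ⟨α, rfl, hα1, hα2⟩ := h p hp
    show 0 ≤ f (circlePt α)
    have hfe : f (circlePt α) = Real.sin (α - θ) := by
      simp [hf, circlePt, Real.sin_sub]; ring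
    rw [hfe]
    exact Real.sin_nonneg_of_nonneg_of_le_pi (by linarith) (by linarith)
  obtain ⟨ε, hε, hball⟩ := Metric.mem_nhds_iff.mp (mem_interior_iff_mem_nhds.mp h0)
  set p : ℝ × ℝ := (ε / 2 * Real.sin θ, -(ε / 2) * Real.cos θ) with hpd
  have hp : p ∈ Metric.ball (0 : ℝ × ℝ) ε := by
    rw [Metric.mem_ball, dist_zero_right, Prod.norm_def]
    have h1 : ‖p.1‖ ≤ ε / 2 := by
      rw [Real.norm_eq_abs, hpd, abs_mul, abs_of_pos (by linarith : (0:ℝ) < ε/2)]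
      nlinarith [Real.abs_sin_le_one θ, abs_nonneg (Real.sin θ)]
    have h2 : ‖p.2‖ ≤ ε / 2 := by
      rw [Real.norm_eq_abs, hpd, abs_mul]
      have : |-(ε/2)| = ε/2 := by rw [abs_neg, abs_of_pos]; linarith
      rw [this]
      nlinarith [Real.abs_cos_le_one θ, abs_nonneg (Real.cos θ)]
    have := max_le h1 h2
    linarith
  have hmem := hsub (hball hp)
  simp only [Set.mem_setOf_eq, hf, hpd] at hmem
  nlinarith [Real.sin_sq_add_cos_sq θ]

lemma refute_lemma {β θ : ℝ} {T : Set (ℝ × ℝ)} {a : ℝ × ℝ}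
    (hβ : θ < β ∧ β < θ + Real.pi)
    (hT : ∀ p ∈ T, p = a ∨ ∃ α, p = circlePt α ∧ θ < α ∧ α < θ + Real.pi) :
    (0 : ℝ × ℝ) ∉ convexHull ℝ (insert (circlePt β) (T \ {a})) := by
  apply not_mem_hull
  rintro p (rfl | ⟨hp, hne⟩)
  · exact ⟨β, rfl, hβ⟩
  · rcases hT p hp with rfl | h
    · exact absurd rfl hne
    · exact h

/-- **Example 2.** Let `u, x, y, v, w, z` be six points on the unit circle in
this clockwise order (angles `au > ax > ay > av > aw > az > au - 2π`), such that the
triangles `A = {u, v, w}` and `B = {x, y, z}` both contain the origin in their interiors and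
the diameter through `w` meets the circle again at a point strictly between `u` and `x`
(`ax < aw + π < au`). Then the only pair `(a, b)` with `a ∈ A`, `b ∈ B` such that both
`(A \ {a}) ∪ {b}` and `(B \ {b}) ∪ {a}` contain the origin in their convex hulls is
`(a, b) = (v, y)`. -/
theorem unique_symmetric_exchange (au ax ay av aw az : ℝ)
    (h1 : ax < au) (h2 : ay < ax) (h3 : av < ay) (h4 : aw < av) (h5 : az < aw)
    (h6 : au - 2 * Real.pi < az)
    (hdiam : ax < aw + Real.pi ∧ aw + Real.pi < au)
    (A B : Set (ℝ × ℝ))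
    (hA : A = {circlePt au, circlePt av, circlePt aw})
    (hB : B = {circlePt ax, circlePt ay, circlePt az})
    (h0A : (0 : ℝ × ℝ) ∈ interior (convexHull ℝ A))
    (h0B : (0 : ℝ × ℝ) ∈ interior (convexHull ℝ B)) :
    ∀ a ∈ A, ∀ b ∈ B,
      (0 : ℝ × ℝ) ∈ convexHull ℝ (insert b (A \ {a})) →
      (0 : ℝ × ℝ) ∈ convexHull ℝ (insert a (B \ {b})) →
      a = circlePt av ∧ b = circlePt ay := by
  have hπ := Real.pi_pos
  obtain ⟨hd1, hd2⟩ := hdiam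
  -- au - av < π
  have hK1 : au - av < Real.pi := by
    by_contra hcon
    push_neg at hcon
    refine not_interior_hull (θ := au - 2 * Real.pi) ?_ h0A
    intro p hp
    rw [hA] at hp
    simp only [Set.mem_insert_iff, Set.mem_singleton_iff] at hp
    rcases hp with rfl | rfl | rfl
    · exact ⟨au - 2 * Real.pi, (circlePt_sub_two_pi au).symm, le_refl _, by linarith⟩
    · exact ⟨av, rfl, by linarith, by linarith⟩
    · exact ⟨aw, rfl, by linarith, by linarith⟩
  -- ay - az < π
  have hK6 : ay - az < Real.pi := by
    by_contra hcon
    push_neg at hcon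
    refine not_interior_hull (θ := az + Real.pi) ?_ h0B
    intro p hp
    rw [hB] at hp
    simp only [Set.mem_insert_iff, Set.mem_singleton_iff] at hp
    rcases hp with rfl | rfl | rfl
    · exact ⟨ax, rfl, by linarith, by linarith⟩
    · exact ⟨ay, rfl, by linarith, by linarith⟩
    · exact ⟨az + 2 * Real.pi, (circlePt_add_two_pi az).symm, by linarith, by linarith⟩
  intro a ha b hb hc1 hc2
  rw [hA] at ha
  rw [hB] at hb
  simp only [Set.mem_insert_iff, Set.mem_singleton_iff] at ha hb
  have hAmem : ∀ p ∈ A, p = circlePt au ∨ p = circlePt av ∨ p = circlePt aw := by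
    intro p hp; rw [hA] at hp
    simpa only [Set.mem_insert_iff, Set.mem_singleton_iff] using hp
  have hBmem : ∀ p ∈ B, p = circlePt ax ∨ p = circlePt ay ∨ p = circlePt az := by
    intro p hp; rw [hB] at hp
    simpa only [Set.mem_insert_iff, Set.mem_singleton_iff] using hp
  rcases ha with rfl | rfl | rfl <;> rcases hb with rfl | rfl | rfl
  -- (u, x)
  · exfalso
    refine refute_lemma (θ := (ax + aw - Real.pi) / 2)
      ⟨by linarith, by linarith⟩ ?_ hc1
    intro p hp
    rcases hAmem p hp with rfl | rfl | rfl
    · exact Or.inl rfl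
    · exact Or.inr ⟨av, rfl, by linarith, by linarith⟩
    · exact Or.inr ⟨aw, rfl, by linarith, by linarith⟩
  -- (u, y)
  · exfalso
    refine refute_lemma (θ := (ay + aw - Real.pi) / 2)
      ⟨by linarith, by linarith⟩ ?_ hc1
    intro p hp
    rcases hAmem p hp with rfl | rfl | rfl
    · exact Or.inl rfl
    · exact Or.inr ⟨av, rfl, by linarith, by linarith⟩
    · exact Or.inr ⟨aw, rfl, by linarith, by linarith⟩
  -- (u, z)
  · exfalso
    refine refute_lemma (θ := (av + az - Real.pi) / 2)
      ⟨by linarith, by linarith⟩ ?_ hc1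
    intro p hp
    rcases hAmem p hp with rfl | rfl | rfl
    · exact Or.inl rfl
    · exact Or.inr ⟨av, rfl, by linarith, by linarith⟩
    · exact Or.inr ⟨aw, rfl, by linarith, by linarith⟩
  -- (v, x)
  · exfalso
    refine refute_lemma (θ := (ay + az - Real.pi) / 2)
      ⟨by linarith, by linarith⟩ ?_ hc2
    intro p hp
    rcases hBmem p hp with rfl | rfl | rfl
    · exact Or.inl rfl
    · exact Or.inr ⟨ay, rfl, by linarith, by linarith⟩
    · exact Or.inr ⟨az, rfl, by linarith, by linarith⟩
  -- (v, y) : the good case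
  · exact ⟨rfl, rfl⟩
  -- (v, z)
  · exfalso
    refine refute_lemma (θ := (ax + av - Real.pi) / 2)
      ⟨by linarith, by linarith⟩ ?_ hc2
    intro p hp
    rcases hBmem p hp with rfl | rfl | rfl
    · exact Or.inr ⟨ax, rfl, by linarith, by linarith⟩
    · exact Or.inr ⟨ay, rfl, by linarith, by linarith⟩
    · exact Or.inl rfl
  -- (w, x)
  · exfalso
    refine refute_lemma (θ := (au + av - Real.pi) / 2)
      ⟨by linarith, by linarith⟩ ?_ hc1
    intro p hp
    rcases hAmem p hp with rfl | rfl | rfl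
    · exact Or.inr ⟨au, rfl, by linarith, by linarith⟩
    · exact Or.inr ⟨av, rfl, by linarith, by linarith⟩
    · exact Or.inl rfl
  -- (w, y)
  · exfalso
    refine refute_lemma (θ := (au + av - Real.pi) / 2)
      ⟨by linarith, by linarith⟩ ?_ hc1
    intro p hp
    rcases hAmem p hp with rfl | rfl | rfl
    · exact Or.inr ⟨au, rfl, by linarith, by linarith⟩
    · exact Or.inr ⟨av, rfl, by linarith, by linarith⟩
    · exact Or.inl rfl
  -- (w, z)
  · exfalso
    refine refute_lemma (θ := (ax + aw - Real.pi) / 2)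
      ⟨by linarith, by linarith⟩ ?_ hc2
    intro p hp
    rcases hBmem p hp with rfl | rfl | rfl
    · exact Or.inr ⟨ax, rfl, by linarith, by linarith⟩
    · exact Or.inr ⟨ay, rfl, by linarith, by linarith⟩
    · exact Or.inl rfl
end

section
/- Let T be a spanning tree of a directed graph D whose unique tree path T[s,t] is a directed s-t path with vertex sequence s = w_0, w_1, ..., w_k = t, and let f = (v_{i-1}, v_i) be an arc not in T. If the arc e removed from the tree path T[v_{i-1}, v_i] is an arc of T[s,t] entering some vertex w_j that equals v_j on the path, and T contains the directed path from s to v_j through the arcs f_1,...,f_{j-1}, f along B, then (T \ {e}) ∪ {f} contains both a directed path from s to v_j and the directed path T[v_j, t]; hence it is st-embracing. -/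
/-- Strengthen a chain relation using membership of the second component in the tail. -/
lemma chain'_strengthen {V : Type*} {R S : V → V → Prop} :
    ∀ (l : List V), l.Chain' R → (∀ a b, R a b → b ∈ l.tail → S a b) → l.Chain' S := by
  intro l
  induction l with
  | nil => intro _ _; exact List.isChain_nil
  | cons x xs ih =>
    intro h hmem
    cases xs with
    | nil => exact List.isChain_singleton x
    | cons y ys =>
      rw [List.Chain', List.isChain_cons_cons] at h ⊢
      refine ⟨hmem _ _ h.1 (List.mem_cons_self), ih h.2 ?_⟩
      intro a b hr hb
      exact hmem a b hr (List.mem_cons_of_mem _ hb)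

/-- From a walk (chain) ending at `t`, extract a simple directed path from any
vertex `s` on the walk to `t`, with vertices among those of the walk. -/
lemma walk_to_path {V : Type*} [DecidableEq V] (T : Finset (V × V)) :
    ∀ (n : ℕ) (p : List V), p.length ≤ n → p.Chain' (fun a b => (a, b) ∈ T) →
      ∀ (t : V), p.getLast? = some t → ∀ s ∈ p,
        ∃ q, IsDiPath T s t q ∧ ∀ x ∈ q, x ∈ p := by
  intro n
  induction n with
  | zero =>
    intro p hlen _ t _ s hs
    rw [Nat.le_zero, List.length_eq_zero_iff] at hlen
    subst hlen; simp at hs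
  | succ n ih =>
    intro p hlen hchain t hlast s hs
    obtain ⟨a, b, rfl⟩ := List.append_of_mem hs
    have hsuf : (s :: b) <:+ a ++ s :: b := ⟨a, rfl⟩
    have hchain' : (s :: b).Chain' (fun a b => (a, b) ∈ T) := hchain.suffix hsuf
    have hlast' : (s :: b).getLast? = some t := by
      rwa [List.getLast?_append_of_ne_nil _ (by simp)] at hlast
    have hlenab : (a ++ s :: b).length = a.length + b.length + 1 := by
      simp [List.length_append]; omega
    by_cases hsb : s ∈ b
    · have hbne : b ≠ [] := List.ne_nil_of_mem hsb
      have hlastb : b.getLast? = some t := by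
        rw [show (s :: b) = [s] ++ b from rfl,
          List.getLast?_append_of_ne_nil _ hbne] at hlast'
        exact hlast'
      obtain ⟨q, hq, hsub⟩ := ih b (by omega) hchain'.tail t hlastb s hsb
      exact ⟨q, hq, fun x hx => by simp [hsub x hx]⟩
    · cases b with
      | nil =>
        simp at hlast'
        exact ⟨[s], ⟨by simp, by simp, by simp [hlast'], List.isChain_singleton s⟩,
          by simp⟩
      | cons y c =>
        have hlastb : (y :: c).getLast? = some t := by
          rw [show (s :: y :: c) = [s] ++ (y :: c) from rfl,
            List.getLast?_append_of_ne_nil _ (by simp)] at hlast'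
          exact hlast'
        obtain ⟨q, ⟨hnd, hhd, hlst, hch⟩, hsub⟩ := ih (y :: c) (by have := hlen; simp [List.length_append] at this; omega)
          hchain'.tail t hlastb y (List.mem_cons_self)
        have hqne : q ≠ [] := by intro h; simp [h] at hhd
        refine ⟨s :: q, ⟨?_, by simp, ?_, ?_⟩, ?_⟩
        · refine List.nodup_cons.mpr ⟨fun hsq => hsb (hsub s hsq), hnd⟩
        · rw [show (s :: q) = [s] ++ q from rfl, List.getLast?_append_of_ne_nil _ hqne]
          exact hlst
        · refine List.isChain_cons.mpr ⟨?_, hch⟩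
          intro z hz
          rw [hhd] at hz
          simp at hz
          subst hz
          exact (List.isChain_cons_cons.mp hchain').1
        · intro x hx
          rcases List.mem_cons.mp hx with rfl | hx
          · exact List.mem_append_right _ (List.mem_cons_self)
          · exact List.mem_append_right _ (List.mem_cons_of_mem _ (hsub x hx))

/-- Let `T` be an `st`-embracing spanning tree with directed `s`-`t` path
`p`, let `f = (v (i-1), v i) ∉ T`, and let `e ∈ T` be an arc of `p` entering the vertex
`v j` (with `i ≤ j`), distinct from the arcs `(v l, v (l+1))`, `l < j`, all of which except
`f` lie in `T`. Then `(T \ {e}) ∪ {f}` contains all arcs of the directed path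
`B[s, v_j] = (v 0, v 1), ..., (v (j-1), v j)` as well as a directed path from `v j` to `t`
(the path `T[v_j, t]`); hence `(T \ {e}) ∪ {f}` is `st`-embracing. -/
theorem reroute_is_embracing {V : Type*} [Fintype V] [DecidableEq V]
    (E T : Finset (V × V)) (hTE : T ⊆ E) (hT : IsSpanningTree T)
    (s t : V) (p : List V) (hp : IsDiPath T s t p)
    (v : ℕ → V) (hv0 : v 0 = s) (i j : ℕ) (hi : 1 ≤ i) (hij : i ≤ j)
    (hvinj : Set.InjOn v (Set.Iic j))
    (f : V × V) (hf : f = (v (i - 1), v i)) (hfT : f ∉ T) (hfE : f ∈ E)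
    (e : V × V) (heT : e ∈ T) (hep : e ∈ p.zip p.tail) (hein : e.2 = v j)
    (hene : ∀ l < j, e ≠ (v l, v (l + 1)))
    (harcs : ∀ l < j, l + 1 ≠ i → (v l, v (l + 1)) ∈ T) :
    (∀ l < j, (v l, v (l + 1)) ∈ insert f (T.erase e)) ∧
    (∃ q, IsDiPath (insert f (T.erase e)) (v j) t q) ∧
    StEmbracing (insert f (T.erase e)) s t := by
  obtain ⟨hpnd, hphd, hplast, hpch⟩ := hp
  set T' := insert f (T.erase e) with hT'
  -- Part 1: all arcs of B[s, v j] lie in T'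
  have part1 : ∀ l < j, (v l, v (l + 1)) ∈ T' := by
    intro l hl
    by_cases h1 : l + 1 = i
    · have h2 : l = i - 1 := by omega
      rw [h2, show i - 1 + 1 = i from by omega, ← hf]
      exact Finset.mem_insert_self f _
    · exact Finset.mem_insert_of_mem (Finset.mem_erase.mpr
        ⟨fun h => hene l hl h.symm, harcs l hl h1⟩)
  -- Locate v j on p and take the suffix of p starting at v j
  have hvjtail : v j ∈ p.tail := by rw [← hein]; exact (List.of_mem_zip hep).2
  have hvjmem : v j ∈ p := List.mem_of_mem_tail hvjtail
  obtain ⟨a, c, hpe⟩ := List.append_of_mem hvjmem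
  have hndac : (a ++ v j :: c).Nodup := hpe ▸ hpnd
  have hndsuf : (v j :: c).Nodup := (List.nodup_append.mp hndac).2.1
  have hvjc : v j ∉ c := (List.nodup_cons.mp hndsuf).1
  have hchain_suf : (v j :: c).Chain' (fun a b => (a, b) ∈ T) :=
    (hpe ▸ hpch).suffix ⟨a, rfl⟩
  have hlast_suf : (v j :: c).getLast? = some t := by
    rw [hpe, List.getLast?_append_of_ne_nil _ (by simp)] at hplast
    exact hplast
  -- the suffix avoids e, so it lives in T'
  have hchain_suf' : (v j :: c).Chain' (fun a b => (a, b) ∈ T') := by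
    refine chain'_strengthen _ hchain_suf ?_
    intro x y hxy hy
    simp only [List.tail_cons] at hy
    have hyne : y ≠ v j := fun h => hvjc (h ▸ hy)
    refine Finset.mem_insert_of_mem (Finset.mem_erase.mpr ⟨?_, hxy⟩)
    intro h
    exact hyne ((congrArg Prod.snd h).trans hein)
  have part2 : IsDiPath T' (v j) t (v j :: c) :=
    ⟨hndsuf, by simp, hlast_suf, hchain_suf'⟩
  refine ⟨part1, ⟨v j :: c, part2⟩, ?_⟩
  -- Part 3: concatenate B[s, v j] with the suffix to get an s-t walk in T'
  set A : List V := (List.range (j + 1)).map v with hA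
  have hAne : A ≠ [] := by simp [hA]
  have hAhd : A.head? = some s := by
    rw [hA, List.range_succ_eq_map]
    simp [hv0]
  have hAlast : A.getLast? = some (v j) := by
    rw [hA, List.range_succ, List.map_append]
    simp
  have hAch : A.Chain' (fun a b => (a, b) ∈ T') := by
    rw [hA, List.Chain', List.isChain_map, List.isChain_range_succ]
    exact part1
  set w : List V := A ++ c with hw
  have hwch : w.Chain' (fun a b => (a, b) ∈ T') := by
    rw [hw, List.Chain', List.isChain_append]
    refine ⟨hAch, hchain_suf'.tail, ?_⟩
    intro x hx y hy
    rw [hAlast] at hx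
    simp only [Option.mem_some_iff] at hx
    subst hx
    exact (List.isChain_cons.mp hchain_suf').1 y hy
  have hwlast : w.getLast? = some t := by
    rcases eq_or_ne c [] with rfl | hc
    · rw [hw, List.append_nil, hAlast]
      simp at hlast_suf
      rw [hlast_suf]
    · rw [hw, List.getLast?_append_of_ne_nil _ hc]
      rw [show (v j :: c) = [v j] ++ c from rfl,
        List.getLast?_append_of_ne_nil _ hc] at hlast_suf
      exact hlast_suf
  have hsw : s ∈ w := by
    refine List.mem_append_left _ ?_
    cases hA' : A with
    | nil => exact absurd hA' hAne
    | cons z zs =>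
      rw [hA'] at hAhd
      simp only [List.head?_cons, Option.some.injEq] at hAhd
      rw [← hAhd]
      exact List.mem_cons_self
  obtain ⟨q, hq, -⟩ := walk_to_path T' w.length w le_rfl hwch t hwlast s hsw
  exact ⟨q, hq⟩
end
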